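/- Let E, F be normed L-spaces, and define ‖U‖_L := inf{ Σ_k ‖a_k‖‖u_k‖‖v_k‖ } over all representations U = Σ_{k=1}^n a_k · (u_k ◇ v_k) with a_k ∈ B(L), u_k ∈ L⊗E, v_k ∈ L⊗F. Then ‖·‖_L is an L-seminorm on E ⊗ F (i.e. a seminorm with ‖a · U‖_L ≤ ‖a‖‖U‖_L), it satisfies ‖u ◇ v‖_L ≤ ‖u‖‖v‖, and the induced seminorm on E ⊗ F satisfies ‖x ⊗ y‖ ≤ ‖x‖‖y‖. -/

import Mathlib

open TensorProduct

/-- The extended diamond operation `(ξ ⊗ x) ◇ (η ⊗ y) = (ξ ◇ η) ⊗ (x ⊗ y)`. -/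
noncomputable def diamondT {L E F : Type*}
    [AddCommGroup L] [Module ℂ L] [AddCommGroup E] [Module ℂ E]
    [AddCommGroup F] [Module ℂ F]
    (d : L →ₗ[ℂ] L →ₗ[ℂ] L) (u : L ⊗[ℂ] E) (v : L ⊗[ℂ] F) : L ⊗[ℂ] (E ⊗[ℂ] F) :=
  TensorProduct.map (TensorProduct.lift d) LinearMap.id
    (TensorProduct.tensorTensorTensorComm ℂ L E L F (u ⊗ₜ[ℂ] v))

/-- The general `L`-tensor norm `‖U‖_L = inf Σ ‖a_k‖‖u_k‖‖v_k‖` over representations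
`U = Σ a_k · (u_k ◇ v_k)`. -/
noncomputable def genLNorm {L E F : Type*}
    [NormedAddCommGroup L] [NormedSpace ℂ L] [AddCommGroup E] [Module ℂ E]
    [AddCommGroup F] [Module ℂ F]
    (d : L →ₗ[ℂ] L →ₗ[ℂ] L) (NE : L ⊗[ℂ] E → ℝ) (NF : L ⊗[ℂ] F → ℝ)
    (U : L ⊗[ℂ] (E ⊗[ℂ] F)) : ℝ :=
  sInf {r : ℝ | ∃ (n : ℕ) (a : Fin n → (L →L[ℂ] L))
      (u : Fin n → L ⊗[ℂ] E) (v : Fin n → L ⊗[ℂ] F),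
    U = ∑ k, LinearMap.rTensor (E ⊗[ℂ] F) ((a k : L →ₗ[ℂ] L)) (diamondT d (u k) (v k)) ∧
    r = ∑ k, ‖a k‖ * NE (u k) * NF (v k)}

section Aux

variable {L E F : Type*}
    [NormedAddCommGroup L] [NormedSpace ℂ L]
    [NormedAddCommGroup E] [NormedSpace ℂ E]
    [NormedAddCommGroup F] [NormedSpace ℂ F]

/-- The set of representation values used in `genLNorm`. -/
def genSet (d : L →ₗ[ℂ] L →ₗ[ℂ] L) (NE : L ⊗[ℂ] E → ℝ) (NF : L ⊗[ℂ] F → ℝ)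
    (U : L ⊗[ℂ] (E ⊗[ℂ] F)) : Set ℝ :=
  {r : ℝ | ∃ (n : ℕ) (a : Fin n → (L →L[ℂ] L))
      (u : Fin n → L ⊗[ℂ] E) (v : Fin n → L ⊗[ℂ] F),
    U = ∑ k, LinearMap.rTensor (E ⊗[ℂ] F) ((a k : L →ₗ[ℂ] L)) (diamondT d (u k) (v k)) ∧
    r = ∑ k, ‖a k‖ * NE (u k) * NF (v k)}

lemma genLNorm_eq_sInf (d : L →ₗ[ℂ] L →ₗ[ℂ] L) (NE : L ⊗[ℂ] E → ℝ) (NF : L ⊗[ℂ] F → ℝ)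
    (U : L ⊗[ℂ] (E ⊗[ℂ] F)) : genLNorm d NE NF U = sInf (genSet d NE NF U) := rfl

lemma diamondT_tmul (d : L →ₗ[ℂ] L →ₗ[ℂ] L) (ξ η : L) (x : E) (y : F) :
    diamondT d (ξ ⊗ₜ[ℂ] x) (η ⊗ₜ[ℂ] y) = (d ξ η) ⊗ₜ[ℂ] (x ⊗ₜ[ℂ] y) := by
  simp [diamondT]

/-- Existence of a representation of a pure tensor, with control of the norm of `a`. -/
lemma exists_rep_tmul [Nontrivial L] (d : L →ₗ[ℂ] L →ₗ[ℂ] L)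
    (hd : ∀ ξ η : L, ‖d ξ η‖ = ‖ξ‖ * ‖η‖) (ξ : L) (x : E) (y : F) :
    ∃ (a : L →L[ℂ] L) (η ζ : L), ‖a‖ = ‖ξ‖ ∧ ‖η‖ = 1 ∧ ‖ζ‖ = 1 ∧
      ξ ⊗ₜ[ℂ] (x ⊗ₜ[ℂ] y) =
        LinearMap.rTensor (E ⊗[ℂ] F) ((a : L →ₗ[ℂ] L))
          (diamondT d (η ⊗ₜ[ℂ] x) (ζ ⊗ₜ[ℂ] y)) := by
  obtain ⟨z, hz⟩ := exists_ne (0 : L)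
  have hz' : ‖z‖ ≠ 0 := norm_ne_zero_iff.mpr hz
  set e : L := ((‖z‖⁻¹ : ℝ) : ℂ) • z with he_def
  have he : ‖e‖ = 1 := by
    rw [he_def, norm_smul, Complex.norm_real, Real.norm_eq_abs,
      abs_of_nonneg (inv_nonneg.mpr (norm_nonneg z)), inv_mul_cancel₀ hz']
  have hμ : ‖d e e‖ = 1 := by rw [hd, he, one_mul]
  have hμ0 : d e e ≠ 0 := by
    intro h; rw [h, norm_zero] at hμ; exact one_ne_zero hμ.symm
  obtain ⟨f, hf1, hfμ⟩ := exists_dual_vector ℂ (d e e) (norm_ne_zero_iff.mpr hμ0)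
  refine ⟨f.smulRight ξ, e, e, ?_, he, he, ?_⟩
  · rw [ContinuousLinearMap.norm_smulRight_apply, hf1, one_mul]
  · rw [diamondT_tmul, LinearMap.rTensor_tmul]
    have : ((f.smulRight ξ : L →L[ℂ] L) : L →ₗ[ℂ] L) (d e e) = ξ := by
      simp [hfμ, hμ]
    rw [this]

/-- Every element has a representation. -/
lemma exists_rep [Nontrivial L] (d : L →ₗ[ℂ] L →ₗ[ℂ] L)
    (hd : ∀ ξ η : L, ‖d ξ η‖ = ‖ξ‖ * ‖η‖) (U : L ⊗[ℂ] (E ⊗[ℂ] F)) :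
    ∃ (n : ℕ) (a : Fin n → (L →L[ℂ] L))
      (u : Fin n → L ⊗[ℂ] E) (v : Fin n → L ⊗[ℂ] F),
      U = ∑ k, LinearMap.rTensor (E ⊗[ℂ] F) ((a k : L →ₗ[ℂ] L))
        (diamondT d (u k) (v k)) := by
  have hzero : ∃ (n : ℕ) (a : Fin n → (L →L[ℂ] L))
      (u : Fin n → L ⊗[ℂ] E) (v : Fin n → L ⊗[ℂ] F),
      (0 : L ⊗[ℂ] (E ⊗[ℂ] F)) = ∑ k, LinearMap.rTensor (E ⊗[ℂ] F) ((a k : L →ₗ[ℂ] L))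
        (diamondT d (u k) (v k)) :=
    ⟨0, Fin.elim0, Fin.elim0, Fin.elim0, by simp⟩
  have hadd : ∀ U V : L ⊗[ℂ] (E ⊗[ℂ] F),
      (∃ (n : ℕ) (a : Fin n → (L →L[ℂ] L)) (u : Fin n → L ⊗[ℂ] E) (v : Fin n → L ⊗[ℂ] F),
        U = ∑ k, LinearMap.rTensor (E ⊗[ℂ] F) ((a k : L →ₗ[ℂ] L)) (diamondT d (u k) (v k))) →
      (∃ (n : ℕ) (a : Fin n → (L →L[ℂ] L)) (u : Fin n → L ⊗[ℂ] E) (v : Fin n → L ⊗[ℂ] F),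
        V = ∑ k, LinearMap.rTensor (E ⊗[ℂ] F) ((a k : L →ₗ[ℂ] L)) (diamondT d (u k) (v k))) →
      (∃ (n : ℕ) (a : Fin n → (L →L[ℂ] L)) (u : Fin n → L ⊗[ℂ] E) (v : Fin n → L ⊗[ℂ] F),
        U + V = ∑ k, LinearMap.rTensor (E ⊗[ℂ] F) ((a k : L →ₗ[ℂ] L))
          (diamondT d (u k) (v k))) := by
    rintro U V ⟨n, a, u, v, rfl⟩ ⟨m, a', u', v', rfl⟩
    refine ⟨n + m, Fin.append a a', Fin.append u u', Fin.append v v', ?_⟩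
    rw [Fin.sum_univ_add]
    simp only [Fin.append_left, Fin.append_right]
  induction U using TensorProduct.induction_on with
  | zero => exact hzero
  | add U V hU hV => exact hadd U V hU hV
  | tmul ξ w =>
    induction w using TensorProduct.induction_on with
    | zero => rw [tmul_zero]; exact hzero
    | add w₁ w₂ h₁ h₂ => rw [tmul_add]; exact hadd _ _ h₁ h₂
    | tmul x y =>
      obtain ⟨a, η, ζ, -, -, -, hrep⟩ := exists_rep_tmul d hd ξ x y
      exact ⟨1, fun _ => a, fun _ => η ⊗ₜ[ℂ] x, fun _ => ζ ⊗ₜ[ℂ] y, by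
        rw [Fin.sum_univ_one]; exact hrep⟩

end Aux

/-- `‖·‖_L` is an `L`-seminorm on `E ⊗ F` with `‖u ◇ v‖_L ≤ ‖u‖‖v‖`,
and the induced seminorm satisfies `‖x ⊗ y‖ ≤ ‖x‖‖y‖`. -/
theorem genLNorm_is_L_seminorm
    (L E F : Type*) [NormedAddCommGroup L] [NormedSpace ℂ L] [Nontrivial L]
    [NormedAddCommGroup E] [NormedSpace ℂ E]
    [NormedAddCommGroup F] [NormedSpace ℂ F]
    (d : L →ₗ[ℂ] L →ₗ[ℂ] L) (hd : ∀ ξ η : L, ‖d ξ η‖ = ‖ξ‖ * ‖η‖)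
    (NE : L ⊗[ℂ] E → ℝ) (NF : L ⊗[ℂ] F → ℝ)
    (hNE0 : ∀ u, NE u = 0 ↔ u = 0)
    (hNEadd : ∀ u v, NE (u + v) ≤ NE u + NE v)
    (hNEsmul : ∀ (c : ℂ) u, NE (c • u) = ‖c‖ * NE u)
    (hNEcontr : ∀ (a : L →L[ℂ] L) u,
      NE (LinearMap.rTensor E (a : L →ₗ[ℂ] L) u) ≤ ‖a‖ * NE u)
    (hNEund : ∀ (ξ : L) (x : E), ‖ξ‖ = 1 → NE (ξ ⊗ₜ[ℂ] x) = ‖x‖)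
    (hNF0 : ∀ v, NF v = 0 ↔ v = 0)
    (hNFadd : ∀ u v, NF (u + v) ≤ NF u + NF v)
    (hNFsmul : ∀ (c : ℂ) v, NF (c • v) = ‖c‖ * NF v)
    (hNFcontr : ∀ (a : L →L[ℂ] L) v,
      NF (LinearMap.rTensor F (a : L →ₗ[ℂ] L) v) ≤ ‖a‖ * NF v)
    (hNFund : ∀ (ξ : L) (y : F), ‖ξ‖ = 1 → NF (ξ ⊗ₜ[ℂ] y) = ‖y‖) :
    (∀ U : L ⊗[ℂ] (E ⊗[ℂ] F), 0 ≤ genLNorm d NE NF U) ∧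
    (∀ U V : L ⊗[ℂ] (E ⊗[ℂ] F),
      genLNorm d NE NF (U + V) ≤ genLNorm d NE NF U + genLNorm d NE NF V) ∧
    (∀ (c : ℂ) (U : L ⊗[ℂ] (E ⊗[ℂ] F)),
      genLNorm d NE NF (c • U) = ‖c‖ * genLNorm d NE NF U) ∧
    (∀ (a : L →L[ℂ] L) (U : L ⊗[ℂ] (E ⊗[ℂ] F)),
      genLNorm d NE NF (LinearMap.rTensor (E ⊗[ℂ] F) (a : L →ₗ[ℂ] L) U)
        ≤ ‖a‖ * genLNorm d NE NF U) ∧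
    (∀ (u : L ⊗[ℂ] E) (v : L ⊗[ℂ] F),
      genLNorm d NE NF (diamondT d u v) ≤ NE u * NF v) ∧
    (∀ (ξ : L) (x : E) (y : F), ‖ξ‖ = 1 →
      genLNorm d NE NF (ξ ⊗ₜ[ℂ] (x ⊗ₜ[ℂ] y)) ≤ ‖x‖ * ‖y‖) := by
  -- nonnegativity of the component seminorms
  have hNEneg : ∀ u : L ⊗[ℂ] E, 0 ≤ NE u := by
    intro u
    have h1 : NE ((-1 : ℂ) • u) = NE u := by
      rw [hNEsmul]; simp
    have h2 : NE (u + (-1 : ℂ) • u) ≤ NE u + NE ((-1 : ℂ) • u) := hNEadd _ _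
    have h3 : u + (-1 : ℂ) • u = 0 := by simp
    rw [h3, (hNE0 0).mpr rfl, h1] at h2
    linarith
  have hNFneg : ∀ v : L ⊗[ℂ] F, 0 ≤ NF v := by
    intro v
    have h1 : NF ((-1 : ℂ) • v) = NF v := by
      rw [hNFsmul]; simp
    have h2 : NF (v + (-1 : ℂ) • v) ≤ NF v + NF ((-1 : ℂ) • v) := hNFadd _ _
    have h3 : v + (-1 : ℂ) • v = 0 := by simp
    rw [h3, (hNF0 0).mpr rfl, h1] at h2
    linarith
  -- elements of the representation sets are nonnegative
  have hSnonneg : ∀ (U : L ⊗[ℂ] (E ⊗[ℂ] F)), ∀ r ∈ genSet d NE NF U, 0 ≤ r := by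
    rintro U r ⟨n, a, u, v, -, rfl⟩
    exact Finset.sum_nonneg fun k _ =>
      mul_nonneg (mul_nonneg (norm_nonneg _) (hNEneg _)) (hNFneg _)
  have hbdd : ∀ (U : L ⊗[ℂ] (E ⊗[ℂ] F)), BddBelow (genSet d NE NF U) :=
    fun U => ⟨0, fun r hr => hSnonneg U r hr⟩
  have hne : ∀ (U : L ⊗[ℂ] (E ⊗[ℂ] F)), (genSet d NE NF U).Nonempty := by
    intro U
    obtain ⟨n, a, u, v, h⟩ := exists_rep d hd U
    exact ⟨_, n, a, u, v, h, rfl⟩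
  have hnonneg : ∀ U : L ⊗[ℂ] (E ⊗[ℂ] F), 0 ≤ genLNorm d NE NF U := by
    intro U
    rw [genLNorm_eq_sInf]
    exact Real.sInf_nonneg (hSnonneg U)
  -- key scaling lemma
  have key : ∀ (C : ℝ) (W U : L ⊗[ℂ] (E ⊗[ℂ] F)), 0 ≤ C →
      (∀ r ∈ genSet d NE NF U, genLNorm d NE NF W ≤ C * r) →
      genLNorm d NE NF W ≤ C * genLNorm d NE NF U := by
    intro C W U hC h
    rcases hC.eq_or_lt with rfl | hC'
    · obtain ⟨r, hr⟩ := hne U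
      simpa using h r hr
    · rw [genLNorm_eq_sInf d NE NF U, mul_comm, ← div_le_iff₀ hC']
      exact le_csInf (hne U) fun r hr => (div_le_iff₀ hC').mpr
        ((h r hr).trans_eq (mul_comm C r))
  -- triangle inequality
  have htri : ∀ U V : L ⊗[ℂ] (E ⊗[ℂ] F),
      genLNorm d NE NF (U + V) ≤ genLNorm d NE NF U + genLNorm d NE NF V := by
    intro U V
    refine le_of_forall_pos_le_add ?_
    intro ε hε
    have hε2 : 0 < ε / 2 := by linarith
    obtain ⟨rU, hrU, hrU'⟩ := Real.lt_sInf_add_pos (hne U) hε2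
    obtain ⟨rV, hrV, hrV'⟩ := Real.lt_sInf_add_pos (hne V) hε2
    obtain ⟨n, a, u, v, hU, hrUeq⟩ := hrU
    obtain ⟨m, a', u', v', hV, hrVeq⟩ := hrV
    have hmem : rU + rV ∈ genSet d NE NF (U + V) := by
      refine ⟨n + m, Fin.append a a', Fin.append u u', Fin.append v v', ?_, ?_⟩
      · rw [Fin.sum_univ_add]
        simp only [Fin.append_left, Fin.append_right]
        rw [← hU, ← hV]
      · rw [Fin.sum_univ_add]
        simp only [Fin.append_left, Fin.append_right]
        rw [← hrUeq, ← hrVeq]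
    have := csInf_le (hbdd (U + V)) hmem
    rw [genLNorm_eq_sInf]
    rw [genLNorm_eq_sInf, genLNorm_eq_sInf] at *
    linarith
  -- scalar multiplication: the ≤ direction
  have hsmul_le : ∀ (c : ℂ) (U : L ⊗[ℂ] (E ⊗[ℂ] F)),
      genLNorm d NE NF (c • U) ≤ ‖c‖ * genLNorm d NE NF U := by
    intro c U
    refine key ‖c‖ (c • U) U (norm_nonneg c) ?_
    rintro r ⟨n, a, u, v, hU, rfl⟩
    have hmem : (∑ k, ‖c • a k‖ * NE (u k) * NF (v k)) ∈ genSet d NE NF (c • U) := by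
      refine ⟨n, fun k => c • a k, u, v, ?_, rfl⟩
      rw [hU, Finset.smul_sum]
      refine Finset.sum_congr rfl fun k _ => ?_
      rw [ContinuousLinearMap.coe_smul, LinearMap.rTensor_smul, LinearMap.smul_apply]
    refine (csInf_le (hbdd _) hmem).trans ?_
    rw [Finset.mul_sum]
    refine le_of_eq (Finset.sum_congr rfl fun k _ => ?_)
    rw [norm_smul c (a k)]; ring
  -- scalar multiplication: equality
  have hsmul : ∀ (c : ℂ) (U : L ⊗[ℂ] (E ⊗[ℂ] F)),
      genLNorm d NE NF (c • U) = ‖c‖ * genLNorm d NE NF U := by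
    intro c U
    rcases eq_or_ne c 0 with rfl | hc
    · rw [norm_zero, zero_mul, zero_smul]
      refine le_antisymm ?_ (hnonneg 0)
      have hmem : (0 : ℝ) ∈ genSet d NE NF (0 : L ⊗[ℂ] (E ⊗[ℂ] F)) :=
        ⟨0, Fin.elim0, Fin.elim0, Fin.elim0, by simp, by simp⟩
      exact csInf_le (hbdd 0) hmem
    · refine le_antisymm (hsmul_le c U) ?_
      have h1 := hsmul_le c⁻¹ (c • U)
      rw [smul_smul, inv_mul_cancel₀ hc, one_smul] at h1
      have hcc : ‖c‖ * ‖c⁻¹‖ = 1 := by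
        rw [← norm_mul, mul_inv_cancel₀ hc, norm_one]
      calc ‖c‖ * genLNorm d NE NF U
          ≤ ‖c‖ * (‖c⁻¹‖ * genLNorm d NE NF (c • U)) :=
            mul_le_mul_of_nonneg_left h1 (norm_nonneg c)
        _ = genLNorm d NE NF (c • U) := by rw [← mul_assoc, hcc, one_mul]
  -- contraction
  have hcontr : ∀ (a : L →L[ℂ] L) (U : L ⊗[ℂ] (E ⊗[ℂ] F)),
      genLNorm d NE NF (LinearMap.rTensor (E ⊗[ℂ] F) (a : L →ₗ[ℂ] L) U)
        ≤ ‖a‖ * genLNorm d NE NF U := by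
    intro a U
    refine key ‖a‖ _ U (norm_nonneg a) ?_
    rintro r ⟨n, b, u, v, hU, rfl⟩
    have hmem : (∑ k, ‖a.comp (b k)‖ * NE (u k) * NF (v k)) ∈
        genSet d NE NF (LinearMap.rTensor (E ⊗[ℂ] F) (a : L →ₗ[ℂ] L) U) := by
      refine ⟨n, fun k => a.comp (b k), u, v, ?_, rfl⟩
      rw [hU, map_sum]
      refine Finset.sum_congr rfl fun k _ => ?_
      rw [ContinuousLinearMap.toLinearMap_comp, LinearMap.rTensor_comp, LinearMap.comp_apply]
    refine (csInf_le (hbdd _) hmem).trans ?_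
    rw [Finset.mul_sum]
    refine Finset.sum_le_sum fun k _ => ?_
    have h1 : ‖a.comp (b k)‖ ≤ ‖a‖ * ‖b k‖ := ContinuousLinearMap.opNorm_comp_le a (b k)
    have := mul_le_mul_of_nonneg_right
      (mul_le_mul_of_nonneg_right h1 (hNEneg (u k))) (hNFneg (v k))
    calc ‖a.comp (b k)‖ * NE (u k) * NF (v k)
        ≤ ‖a‖ * ‖b k‖ * NE (u k) * NF (v k) := this
      _ = ‖a‖ * (‖b k‖ * NE (u k) * NF (v k)) := by ring
  -- diamond bound
  have hdia : ∀ (u : L ⊗[ℂ] E) (v : L ⊗[ℂ] F),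
      genLNorm d NE NF (diamondT d u v) ≤ NE u * NF v := by
    intro u v
    have hmem : (∑ _k : Fin 1, ‖(1 : L →L[ℂ] L)‖ * NE u * NF v) ∈
        genSet d NE NF (diamondT d u v) := by
      refine ⟨1, fun _ => 1, fun _ => u, fun _ => v, ?_, rfl⟩
      rw [Fin.sum_univ_one, ContinuousLinearMap.one_def, ContinuousLinearMap.coe_id,
        LinearMap.rTensor_id, LinearMap.id_apply]
    refine (csInf_le (hbdd _) hmem).trans ?_
    rw [Fin.sum_univ_one, ContinuousLinearMap.one_def, ContinuousLinearMap.norm_id, one_mul]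
  -- cross norm bound
  have hcross : ∀ (ξ : L) (x : E) (y : F), ‖ξ‖ = 1 →
      genLNorm d NE NF (ξ ⊗ₜ[ℂ] (x ⊗ₜ[ℂ] y)) ≤ ‖x‖ * ‖y‖ := by
    intro ξ x y hξ
    obtain ⟨a, η, ζ, ha, hη, hζ, hrep⟩ := exists_rep_tmul d hd ξ x y
    have hmem : (∑ _k : Fin 1, ‖a‖ * NE (η ⊗ₜ[ℂ] x) * NF (ζ ⊗ₜ[ℂ] y)) ∈
        genSet d NE NF (ξ ⊗ₜ[ℂ] (x ⊗ₜ[ℂ] y)) := by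
      refine ⟨1, fun _ => a, fun _ => η ⊗ₜ[ℂ] x, fun _ => ζ ⊗ₜ[ℂ] y, ?_, rfl⟩
      rw [Fin.sum_univ_one]; exact hrep
    refine (csInf_le (hbdd _) hmem).trans ?_
    rw [Fin.sum_univ_one, ha, hξ, one_mul, hNEund η x hη, hNFund ζ y hζ]
  exact ⟨hnonneg, htri, hsmul, hcontr, hdia, hcross⟩
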